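/- Let β, λ > 0. There exists C > 0 such that for all x, z ∈ (0,∞) with x ≠ z, ( ∫_{Γ₊(x)} |t^β ∂_t^β P_t^{𝔅_λ,1}(y,z)|² dy dt / t² )^{1/2} ≤ C/|x−z|, and for all x, z ∈ (0,∞), ( ∫_{Γ₊(x)} |t^β ∂_t^β P_t^{𝔅_λ,2}(y,z)|² dy dt / t² )^{1/2} ≤ C/(x+z), where ∂_t^β acts in the variable t with y, z fixed. -/

import Mathlib

open MeasureTheory Real Set

/-- For `β > 0`, the unique `m ∈ ℕ` with `m - 1 ≤ β < m`. -/
noncomputable def fracOrder (β : ℝ) : ℕ := ⌊β⌋.toNat + 1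

/-- The `β`-th fractional derivative in `t` (à la Segovia–Wheeden):
`∂_t^β F(t) = (e^{−iπ(m−β)}/Γ(m−β)) ∫₀^∞ ∂_t^m F(t+s) s^{m−β−1} ds` with `m - 1 ≤ β < m`. -/
noncomputable def fracDeriv (β : ℝ) (F : ℝ → ℂ) (t : ℝ) : ℂ :=
  (Complex.exp (-(Complex.I * (Real.pi : ℂ) * ((fracOrder β : ℂ) - (β : ℂ)))) /
      Complex.Gamma ((fracOrder β : ℂ) - (β : ℂ))) *
    ∫ s in Set.Ioi (0 : ℝ), iteratedDeriv (fracOrder β) F (t + s) *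
      ((s ^ ((fracOrder β : ℝ) - β - 1) : ℝ) : ℂ)

/-- The part of the Bessel Poisson kernel integral with `θ` ranging over `(a, b)`. -/
noncomputable def besselPoissonPart (lam a b t x y : ℝ) : ℝ :=
  (2 * lam * (x * y) ^ lam * t / Real.pi) *
    ∫ θ in Set.Ioo a b, Real.sin θ ^ (2 * lam - 1) /
      (t ^ 2 + (x - y) ^ 2 + 2 * x * y * (1 - Real.cos θ)) ^ (lam + 1)

/-- The Bessel Poisson kernel `P_t^{𝔅_λ}(x,y)`. -/
noncomputable def besselPoisson (lam t x y : ℝ) : ℝ :=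
  besselPoissonPart lam 0 Real.pi t x y

/-- `P_t^{𝔅_λ,1}(x,y)`: the part of the θ-integral over `(0, π/2)`. -/
noncomputable def besselPoisson1 (lam t x y : ℝ) : ℝ :=
  besselPoissonPart lam 0 (Real.pi / 2) t x y

/-- `P_t^{𝔅_λ,2}(x,y)`: the part of the θ-integral over `(π/2, π)`. -/
noncomputable def besselPoisson2 (lam t x y : ℝ) : ℝ :=
  besselPoissonPart lam (Real.pi / 2) Real.pi t x y


namespace S15

noncomputable def evalT (p : ℝ × ℕ × ℝ) (τ B : ℝ) : ℝ :=
  p.1 * τ ^ p.2.1 * (τ ^ 2 + B) ^ p.2.2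

noncomputable def evalL (L : List (ℝ × ℕ × ℝ)) (τ B : ℝ) : ℝ :=
  (L.map fun p => evalT p τ B).sum

def dT (p : ℝ × ℕ × ℝ) : List (ℝ × ℕ × ℝ) :=
  [(p.1 * (p.2.1 : ℝ), p.2.1 - 1, p.2.2), (p.1 * p.2.2 * 2, p.2.1 + 1, p.2.2 - 1)]

def dL (L : List (ℝ × ℕ × ℝ)) : List (ℝ × ℕ × ℝ) := L.flatMap dT

noncomputable def coeffSum (L : List (ℝ × ℕ × ℝ)) : ℝ := (L.map fun p => |p.1|).sum

lemma evalL_nil (τ B : ℝ) : evalL [] τ B = 0 := rfl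

lemma evalL_cons (p : ℝ × ℕ × ℝ) (L : List (ℝ × ℕ × ℝ)) (τ B : ℝ) :
    evalL (p :: L) τ B = evalT p τ B + evalL L τ B := by
  simp [evalL]

lemma evalL_append (L₁ L₂ : List (ℝ × ℕ × ℝ)) (τ B : ℝ) :
    evalL (L₁ ++ L₂) τ B = evalL L₁ τ B + evalL L₂ τ B := by
  simp [evalL]

lemma coeffSum_nonneg (L : List (ℝ × ℕ × ℝ)) : 0 ≤ coeffSum L := by
  refine List.sum_nonneg ?_
  intro x hx
  simp only [List.mem_map] at hx
  obtain ⟨p, _, rfl⟩ := hx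
  exact abs_nonneg _

lemma hasDerivAt_evalT (p : ℝ × ℕ × ℝ) {B : ℝ} (hB : 0 < B) (τ : ℝ) :
    HasDerivAt (fun σ => evalT p σ B) (evalL (dT p) τ B) τ := by
  obtain ⟨c, i, e⟩ := p
  have hbase : (0:ℝ) < τ ^ 2 + B := by positivity
  have h1 : HasDerivAt (fun σ : ℝ => c * σ ^ i) (c * ((i : ℝ) * τ ^ (i - 1))) τ :=
    (hasDerivAt_pow i τ).const_mul c
  have h2 : HasDerivAt (fun σ : ℝ => (σ ^ 2 + B) ^ e)
      (e * (τ ^ 2 + B) ^ (e - 1) * (2 * τ)) τ := by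
    have hb : HasDerivAt (fun σ : ℝ => σ ^ 2 + B) (2 * τ) τ := by
      simpa using (hasDerivAt_pow 2 τ).add_const B
    have hr : HasDerivAt (fun x : ℝ => x ^ e) (e * (τ ^ 2 + B) ^ (e - 1)) (τ ^ 2 + B) :=
      Real.hasDerivAt_rpow_const (Or.inl hbase.ne')
    exact hr.comp τ hb
  have := h1.fun_mul h2
  refine this.congr_deriv (Eq.symm ?_)
  simp only [evalL_cons, evalL_nil, evalT, dT]
  rw [pow_succ]
  ring

lemma hasDerivAt_evalL (L : List (ℝ × ℕ × ℝ)) {B : ℝ} (hB : 0 < B) (τ : ℝ) :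
    HasDerivAt (fun σ => evalL L σ B) (evalL (dL L) τ B) τ := by
  induction L with
  | nil => simpa [evalL_nil, dL] using hasDerivAt_const τ (0:ℝ)
  | cons p L ih =>
      have : dL (p :: L) = dT p ++ dL L := by simp [dL]
      rw [this]
      simp only [evalL_append]
      have h := (hasDerivAt_evalT p hB τ).fun_add ih
      simpa [evalL_cons] using h

/-- invariant: every term with nonzero coefficient has `i/2 + e = E` and `e ≤ 0`. -/
def Inv (E : ℝ) (L : List (ℝ × ℕ × ℝ)) : Prop :=
  ∀ p ∈ L, p.1 = 0 ∨ ((p.2.1 : ℝ) / 2 + p.2.2 = E ∧ p.2.2 ≤ 0)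

lemma inv_dL {E : ℝ} {L : List (ℝ × ℕ × ℝ)} (h : Inv E L) : Inv (E - 1/2) (dL L) := by
  intro q hq
  simp only [dL, List.mem_flatMap] at hq
  obtain ⟨p, hp, hq⟩ := hq
  obtain ⟨c, i, e⟩ := p
  rcases h _ hp with hc | ⟨hE, he⟩
  · simp only [dT, List.mem_cons, List.mem_singleton] at hq
    simp only at hc
    rcases hq with rfl | hq
    · left; simp [hc]
    · rcases hq with rfl | h'
      · left; simp [hc]
      · exact absurd h' List.not_mem_nil
  · simp only [dT, List.mem_cons, List.mem_singleton] at hq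
    rcases hq with rfl | hq
    · rcases Nat.eq_zero_or_pos i with rfl | hi
      · left; simp
      · right
        simp only at hE he ⊢
        constructor
        · have h1 : ((i - 1 : ℕ) : ℝ) = (i : ℝ) - 1 := by
            have h2 : (1:ℕ) ≤ i := hi
            push_cast [h2]
            ring
          rw [h1]
          linarith
        · exact he
    · rcases hq with rfl | h'
      · right
        simp only at hE he ⊢
        refine ⟨?_, by linarith⟩
        push_cast
        linarith
      · exact absurd h' List.not_mem_nil

lemma abs_evalT_le {E : ℝ} (p : ℝ × ℕ × ℝ) {B τ : ℝ} (hB : 0 < B)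
    (hp : p.1 = 0 ∨ ((p.2.1 : ℝ) / 2 + p.2.2 = E ∧ p.2.2 ≤ 0)) :
    |evalT p τ B| ≤ |p.1| * (τ ^ 2 + B) ^ E := by
  obtain ⟨c, i, e⟩ := p
  have hbase : (0:ℝ) < τ ^ 2 + B := by positivity
  rcases hp with hc | ⟨hE, _⟩
  · simp only at hc
    simp only [evalT, hc]
    have := Real.rpow_nonneg (by positivity : (0:ℝ) ≤ τ ^ 2 + B) E
    simp only [zero_mul, abs_zero]
    positivity
  · have h1 : |evalT (c, i, e) τ B| = |c| * |τ| ^ i * (τ ^ 2 + B) ^ e := by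
      simp only [evalT, abs_mul, abs_pow]
      rw [abs_of_nonneg (Real.rpow_nonneg hbase.le e)]
    rw [h1]
    have hτ : |τ| ≤ Real.sqrt (τ ^ 2 + B) := by
      rw [show |τ| = Real.sqrt (τ ^ 2) by rw [Real.sqrt_sq_eq_abs]]
      exact Real.sqrt_le_sqrt (by linarith)
    have h2 : |τ| ^ i ≤ Real.sqrt (τ ^ 2 + B) ^ i :=
      pow_le_pow_left₀ (abs_nonneg τ) hτ i
    have h3 : Real.sqrt (τ ^ 2 + B) ^ i = (τ ^ 2 + B) ^ ((i : ℝ) / 2) := by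
      rw [Real.sqrt_eq_rpow, ← Real.rpow_natCast ((τ ^ 2 + B) ^ ((1:ℝ)/2)) i,
        ← Real.rpow_mul hbase.le]
      ring_nf
    calc |c| * |τ| ^ i * (τ ^ 2 + B) ^ e
        ≤ |c| * (τ ^ 2 + B) ^ ((i : ℝ) / 2) * (τ ^ 2 + B) ^ e := by
          rw [← h3]
          have := Real.rpow_nonneg hbase.le e
          gcongr
      _ = |c| * (τ ^ 2 + B) ^ E := by
          rw [mul_assoc, ← Real.rpow_add hbase, hE]

lemma abs_evalL_le {E : ℝ} {L : List (ℝ × ℕ × ℝ)} (hInv : Inv E L) {B τ : ℝ} (hB : 0 < B) :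
    |evalL L τ B| ≤ coeffSum L * (τ ^ 2 + B) ^ E := by
  induction L with
  | nil => simp [evalL_nil, coeffSum]
  | cons p L ih =>
      have hβ : Inv E L := fun q hq => hInv q (List.mem_cons_of_mem _ hq)
      have hcs : coeffSum (p :: L) = |p.1| + coeffSum L := by simp [coeffSum]
      rw [evalL_cons, hcs, add_mul]
      refine (abs_add_le _ _).trans (add_le_add ?_ (ih hβ))
      exact abs_evalT_le p hB (hInv p List.mem_cons_self)

noncomputable def LL (lam : ℝ) : ℕ → List (ℝ × ℕ × ℝ) :=
  fun k => dL^[k] [(1, 1, -(lam + 1))]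

lemma LL_succ (lam : ℝ) (k : ℕ) : LL lam (k + 1) = dL (LL lam k) :=
  Function.iterate_succ_apply' dL k _

noncomputable def EE (lam : ℝ) (k : ℕ) : ℝ := 1 / 2 - (lam + 1) - k / 2

lemma EE_neg {lam : ℝ} (hlam : 0 < lam) (k : ℕ) : EE lam k < 0 := by
  have : (0:ℝ) ≤ (k : ℝ) := Nat.cast_nonneg k
  unfold EE; linarith

lemma inv_LL {lam : ℝ} (hlam : 0 < lam) (k : ℕ) : Inv (EE lam k) (LL lam k) := by
  induction k with
  | zero =>
      intro p hp
      simp only [LL, Function.iterate_zero_apply, List.mem_singleton] at hp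
      subst hp
      right
      constructor
      · simp [EE]; ring
      · simp only; linarith
  | succ k ih =>
      rw [LL_succ]
      have h := inv_dL ih
      have : EE lam (k+1) = EE lam k - 1/2 := by unfold EE; push_cast; ring
      rw [this]
      exact h

noncomputable def bb (y z θ : ℝ) : ℝ := (y - z) ^ 2 + 2 * y * z * (1 - Real.cos θ)

lemma one_sub_cos_eq (θ : ℝ) : 1 - Real.cos θ = 2 * Real.sin (θ / 2) ^ 2 := by
  have := Real.sin_sq_eq_half_sub (θ / 2)
  rw [show 2 * (θ / 2) = θ by ring] at this
  linarith

lemma one_sub_cos_pos {θ : ℝ} (h1 : 0 < θ) (h2 : θ < π) : 0 < 1 - Real.cos θ := by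
  rw [one_sub_cos_eq]
  have hs : 0 < Real.sin (θ / 2) :=
    Real.sin_pos_of_pos_of_lt_pi (by linarith) (by linarith [Real.pi_pos])
  positivity

lemma bb_pos {y z θ : ℝ} (hy : 0 < y) (hz : 0 < z) (h1 : 0 < θ) (h2 : θ < π) :
    0 < bb y z θ := by
  have := one_sub_cos_pos h1 h2
  have h3 : (0:ℝ) ≤ (y - z)^2 := sq_nonneg _
  unfold bb; positivity

lemma bb_continuous (y z : ℝ) : Continuous (bb y z) := by
  unfold bb; continuity

noncomputable def JJ (lam a b y z : ℝ) (k : ℕ) (τ : ℝ) : ℝ :=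
  ∫ θ in Ioo a b, Real.sin θ ^ (2 * lam - 1) * evalL (LL lam k) τ (bb y z θ)

lemma contOn_evalL {y z a b : ℝ} (hy : 0 < y) (hz : 0 < z) (ha : 0 ≤ a) (hb : b ≤ π)
    (L : List (ℝ × ℕ × ℝ)) (τ : ℝ) :
    ContinuousOn (fun θ => evalL L τ (bb y z θ)) (Ioo a b) := by
  induction L with
  | nil => simpa [evalL_nil] using continuousOn_const
  | cons p L ih =>
      simp only [evalL_cons]
      refine ContinuousOn.add ?_ ih
      obtain ⟨c, i, e⟩ := p
      simp only [evalT]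
      refine (continuousOn_const.mul ?_)
      refine ContinuousOn.rpow_const ?_ ?_
      · exact (continuousOn_const.add (bb_continuous y z).continuousOn)
      · intro θ hθ
        left
        have := bb_pos hy hz (lt_of_le_of_lt ha hθ.1) (lt_of_lt_of_le hθ.2 hb)
        positivity

lemma contOn_w {lam a b : ℝ} (ha : 0 ≤ a) (hb : b ≤ π) :
    ContinuousOn (fun θ => Real.sin θ ^ (2 * lam - 1)) (Ioo a b) := by
  refine ContinuousOn.rpow_const Real.continuous_sin.continuousOn ?_
  intro θ hθ
  left
  exact (Real.sin_pos_of_pos_of_lt_pi (lt_of_le_of_lt ha hθ.1)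
    (lt_of_lt_of_le hθ.2 hb)).ne'

lemma aesm_F {lam y z a b : ℝ} (hy : 0 < y) (hz : 0 < z) (ha : 0 ≤ a) (hb : b ≤ π)
    (L : List (ℝ × ℕ × ℝ)) (τ : ℝ) :
    AEStronglyMeasurable (fun θ => Real.sin θ ^ (2 * lam - 1) * evalL L τ (bb y z θ))
      (volume.restrict (Ioo a b)) :=
  ((contOn_w ha hb).mul (contOn_evalL hy hz ha hb L τ)).aestronglyMeasurable measurableSet_Ioo

lemma abs_F_le {lam y z a b : ℝ} (hlam : 0 < lam) (hy : 0 < y) (hz : 0 < z)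
    (ha : 0 ≤ a) (hb : b ≤ π) (k : ℕ) {τ c : ℝ} (hc : 0 < c) (hτ : c ≤ τ ^ 2)
    {θ : ℝ} (hθ : θ ∈ Ioo a b) {φθ : ℝ} (hwφ : Real.sin θ ^ (2 * lam - 1) ≤ φθ) :
    |Real.sin θ ^ (2 * lam - 1) * evalL (LL lam k) τ (bb y z θ)|
      ≤ coeffSum (LL lam k) * c ^ EE lam k * φθ := by
  have hsin : 0 < Real.sin θ :=
    Real.sin_pos_of_pos_of_lt_pi (lt_of_le_of_lt ha hθ.1) (lt_of_lt_of_le hθ.2 hb)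
  have hw : 0 ≤ Real.sin θ ^ (2 * lam - 1) := Real.rpow_nonneg hsin.le _
  have hbb : 0 < bb y z θ := bb_pos hy hz (lt_of_le_of_lt ha hθ.1) (lt_of_lt_of_le hθ.2 hb)
  have h1 : |evalL (LL lam k) τ (bb y z θ)| ≤ coeffSum (LL lam k) * (τ^2 + bb y z θ) ^ EE lam k :=
    abs_evalL_le (inv_LL hlam k) hbb
  have h2 : (τ^2 + bb y z θ) ^ EE lam k ≤ c ^ EE lam k :=
    Real.rpow_le_rpow_of_nonpos hc (by linarith) (EE_neg hlam k).le
  have h3 : |evalL (LL lam k) τ (bb y z θ)| ≤ coeffSum (LL lam k) * c ^ EE lam k :=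
    h1.trans (by have := coeffSum_nonneg (LL lam k); gcongr)
  calc |Real.sin θ ^ (2 * lam - 1) * evalL (LL lam k) τ (bb y z θ)|
      = Real.sin θ ^ (2 * lam - 1) * |evalL (LL lam k) τ (bb y z θ)| := by
        rw [abs_mul, abs_of_nonneg hw]
    _ ≤ φθ * (coeffSum (LL lam k) * c ^ EE lam k) := by
        refine mul_le_mul hwφ h3 (abs_nonneg _) (le_trans hw hwφ)
    _ = coeffSum (LL lam k) * c ^ EE lam k * φθ := by ring

lemma integrable_F {lam y z a b : ℝ} {φ : ℝ → ℝ} (hlam : 0 < lam) (hy : 0 < y) (hz : 0 < z)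
    (ha : 0 ≤ a) (hb : b ≤ π) (hφint : IntegrableOn φ (Ioo a b))
    (hwφ : ∀ θ ∈ Ioo a b, Real.sin θ ^ (2 * lam - 1) ≤ φ θ)
    (k : ℕ) {τ c : ℝ} (hc : 0 < c) (hτ : c ≤ τ ^ 2) :
    Integrable (fun θ => Real.sin θ ^ (2 * lam - 1) * evalL (LL lam k) τ (bb y z θ))
      (volume.restrict (Ioo a b)) := by
  refine Integrable.mono' (g := fun θ => coeffSum (LL lam k) * c ^ EE lam k * φ θ)
    ((hφint.const_mul _)) (aesm_F hy hz ha hb _ τ) ?_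
  filter_upwards [ae_restrict_mem measurableSet_Ioo] with θ hθ
  rw [Real.norm_eq_abs]
  exact abs_F_le hlam hy hz ha hb k hc hτ hθ (hwφ θ hθ)

lemma JJ_hasDerivAt {lam y z a b : ℝ} {φ : ℝ → ℝ} (hlam : 0 < lam) (hy : 0 < y) (hz : 0 < z)
    (ha : 0 ≤ a) (hb : b ≤ π) (hφint : IntegrableOn φ (Ioo a b))
    (hwφ : ∀ θ ∈ Ioo a b, Real.sin θ ^ (2 * lam - 1) ≤ φ θ)
    (k : ℕ) {τ0 : ℝ} (hτ0 : 0 < τ0) :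
    HasDerivAt (JJ lam a b y z k) (JJ lam a b y z (k + 1) τ0) τ0 := by
  have hc : (0:ℝ) < (τ0 / 2) ^ 2 := by positivity
  have key := hasDerivAt_integral_of_dominated_loc_of_deriv_le
    (F := fun τ θ => Real.sin θ ^ (2 * lam - 1) * evalL (LL lam k) τ (bb y z θ))
    (F' := fun τ θ => Real.sin θ ^ (2 * lam - 1) * evalL (LL lam (k+1)) τ (bb y z θ))
    (μ := volume.restrict (Ioo a b)) (x₀ := τ0)
    (bound := fun θ => coeffSum (LL lam (k+1)) * ((τ0/2)^2) ^ EE lam (k+1) * φ θ)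
    (s := Metric.ball τ0 (τ0 / 2)) (Metric.ball_mem_nhds _ (by positivity))
    (Filter.Eventually.of_forall fun τ => aesm_F hy hz ha hb _ τ)
    (integrable_F hlam hy hz ha hb hφint hwφ k hc (by nlinarith))
    (aesm_F hy hz ha hb _ τ0)
    ?_ ((hφint.const_mul _)) ?_
  · exact key.2
  · filter_upwards [ae_restrict_mem measurableSet_Ioo] with θ hθ
    intro τ hτ
    rw [Real.norm_eq_abs]
    have hττ : τ0 / 2 < τ := by
      have := abs_lt.1 (mem_ball_iff_norm.1 hτ)
      linarith [this.1]
    exact abs_F_le hlam hy hz ha hb (k+1) hc (by nlinarith) hθ (hwφ θ hθ)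
  · filter_upwards [ae_restrict_mem measurableSet_Ioo] with θ hθ
    intro τ hτ
    have hbb : 0 < bb y z θ := bb_pos hy hz (lt_of_le_of_lt ha hθ.1) (lt_of_lt_of_le hθ.2 hb)
    rw [LL_succ]
    exact (hasDerivAt_evalL (LL lam k) hbb τ).const_mul _

lemma besselPart_eq (lam a b τ : ℝ) {y z : ℝ} (hy : 0 < y) (hz : 0 < z) :
    besselPoissonPart lam a b τ y z
      = (2 * lam * (y * z) ^ lam / π) * JJ lam a b y z 0 τ := by
  unfold besselPoissonPart JJ
  rw [show (2 * lam * (y * z) ^ lam * τ / π) = (2 * lam * (y * z) ^ lam / π) * τ by ring,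
    mul_assoc, ← integral_const_mul]
  congr 1
  refine MeasureTheory.integral_congr_ae (Filter.Eventually.of_forall fun θ => ?_)
  have hbase : (0:ℝ) ≤ τ ^ 2 + (y - z) ^ 2 + 2 * y * z * (1 - Real.cos θ) := by
    have h1 : Real.cos θ ≤ 1 := Real.cos_le_one θ
    have h2 : (0:ℝ) ≤ 2 * y * z * (1 - Real.cos θ) := by
      apply mul_nonneg (by positivity); linarith
    nlinarith [sq_nonneg τ, sq_nonneg (y - z)]
  show τ * (Real.sin θ ^ (2 * lam - 1) /
      (τ ^ 2 + (y - z) ^ 2 + 2 * y * z * (1 - Real.cos θ)) ^ (lam + 1))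
    = Real.sin θ ^ (2 * lam - 1) * evalL (LL lam 0) τ (bb y z θ)
  have hL : evalL (LL lam 0) τ (bb y z θ)
      = τ * (τ ^ 2 + bb y z θ) ^ (-(lam + 1)) := by
    simp [LL, evalL_cons, evalL_nil, evalT]
  rw [hL]
  unfold bb
  rw [div_eq_mul_inv, ← Real.rpow_neg hbase, show τ ^ 2 + ((y - z) ^ 2
      + 2 * y * z * (1 - Real.cos θ)) = τ ^ 2 + (y - z) ^ 2 + 2 * y * z * (1 - Real.cos θ) by ring]
  ring

lemma iteratedDeriv_eq {lam y z a b : ℝ} {φ : ℝ → ℝ} (hlam : 0 < lam) (hy : 0 < y) (hz : 0 < z)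
    (ha : 0 ≤ a) (hb : b ≤ π) (hφint : IntegrableOn φ (Ioo a b))
    (hwφ : ∀ θ ∈ Ioo a b, Real.sin θ ^ (2 * lam - 1) ≤ φ θ) (k : ℕ) :
    ∀ τ : ℝ, 0 < τ →
      iteratedDeriv k (fun σ : ℝ => ((besselPoissonPart lam a b σ y z : ℝ) : ℂ)) τ
        = (((2 * lam * (y * z) ^ lam / π) * JJ lam a b y z k τ : ℝ) : ℂ) := by
  induction k with
  | zero =>
      intro τ hτ
      rw [iteratedDeriv_zero, besselPart_eq lam a b τ hy hz]
  | succ k ih =>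
      intro τ hτ
      rw [iteratedDeriv_succ]
      have hev : iteratedDeriv k (fun σ : ℝ => ((besselPoissonPart lam a b σ y z : ℝ) : ℂ))
          =ᶠ[nhds τ] fun σ => (((2 * lam * (y * z) ^ lam / π) * JJ lam a b y z k σ : ℝ) : ℂ) := by
        filter_upwards [Ioi_mem_nhds hτ] with σ hσ
        exact ih σ hσ
      rw [hev.deriv_eq]
      have hd : HasDerivAt (fun σ => (2 * lam * (y * z) ^ lam / π) * JJ lam a b y z k σ)
          ((2 * lam * (y * z) ^ lam / π) * JJ lam a b y z (k+1) τ) τ :=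
        (JJ_hasDerivAt hlam hy hz ha hb hφint hwφ k hτ).const_mul _
      exact hd.ofReal_comp.deriv

lemma core_lemma {α δ s₀ : ℝ} (hα : -1 < α) (hδ : δ < 0) (hαδ : α + δ + 1 < 0) (hs₀ : 0 < s₀) :
    IntegrableOn (fun s => s ^ α * min (s₀ ^ δ) (s ^ δ)) (Ioi (0:ℝ)) volume ∧
    ∫ s in Ioi (0:ℝ), s ^ α * min (s₀ ^ δ) (s ^ δ)
      ≤ (1/(α+1) + 1/(-(α+δ+1))) * s₀ ^ (α + δ + 1) := by
  set f : ℝ → ℝ := fun s => s ^ α * min (s₀ ^ δ) (s ^ δ) with hf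
  have hsplit : Ioc (0:ℝ) s₀ ∪ Ioi s₀ = Ioi (0:ℝ) := Ioc_union_Ioi_eq_Ioi hs₀.le
  have f1 : EqOn (fun s : ℝ => s ^ α * s₀ ^ δ) f (Ioc 0 s₀) := by
    intro s hs
    have : s₀ ^ δ ≤ s ^ δ := Real.rpow_le_rpow_of_nonpos hs.1 hs.2 hδ.le
    simp only [hf, min_eq_left this]
  have f2 : EqOn (fun s : ℝ => s ^ (α + δ)) f (Ioi s₀) := by
    intro s hs
    have hs' : (0:ℝ) < s := hs₀.trans hs
    have : s ^ δ ≤ s₀ ^ δ := Real.rpow_le_rpow_of_nonpos hs₀ (le_of_lt hs) hδ.le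
    simp only [hf, min_eq_right this, Real.rpow_add hs']
  have I1 : IntegrableOn (fun s : ℝ => s ^ α * s₀ ^ δ) (Ioc 0 s₀) := by
    have h := intervalIntegral.intervalIntegrable_rpow' (a := 0) (b := s₀) hα
    rw [intervalIntegrable_iff_integrableOn_Ioc_of_le hs₀.le] at h
    exact h.mul_const _
  have I2 : IntegrableOn (fun s : ℝ => s ^ (α + δ)) (Ioi s₀) :=
    integrableOn_Ioi_rpow_of_lt (by linarith) hs₀
  have hf1 : IntegrableOn f (Ioc 0 s₀) := I1.congr_fun f1 measurableSet_Ioc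
  have hf2 : IntegrableOn f (Ioi s₀) := I2.congr_fun f2 measurableSet_Ioi
  have hint : IntegrableOn f (Ioi (0:ℝ)) := by
    rw [← hsplit]; exact hf1.union hf2
  refine ⟨hint, ?_⟩
  have e1 : ∫ s in Ioc (0:ℝ) s₀, f s = (s₀ ^ (α + 1) / (α + 1)) * s₀ ^ δ := by
    rw [← setIntegral_congr_fun measurableSet_Ioc f1]
    rw [MeasureTheory.integral_mul_const]
    congr 1
    rw [← intervalIntegral.integral_of_le hs₀.le]
    rw [integral_rpow (Or.inl hα)]
    rw [Real.zero_rpow (by linarith : α + 1 ≠ 0)]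
    ring
  have e2 : ∫ s in Ioi s₀, f s = -s₀ ^ (α + δ + 1) / (α + δ + 1) := by
    rw [← setIntegral_congr_fun measurableSet_Ioi f2]
    exact integral_Ioi_rpow_of_lt (by linarith) hs₀
  have e3 : ∫ s in Ioi (0:ℝ), f s = (∫ s in Ioc (0:ℝ) s₀, f s) + ∫ s in Ioi s₀, f s := by
    rw [← hsplit]
    exact setIntegral_union (Ioc_disjoint_Ioi le_rfl) measurableSet_Ioi hf1 hf2
  rw [e3, e1, e2]
  have h4 : s₀ ^ (α + 1) * s₀ ^ δ = s₀ ^ (α + δ + 1) := by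
    rw [← Real.rpow_add hs₀]; ring_nf
  have h5 : (0:ℝ) < α + 1 := by linarith
  have h6 : (0:ℝ) < -(α + δ + 1) := by linarith
  have h7 : (0:ℝ) ≤ s₀ ^ (α + δ + 1) := Real.rpow_nonneg hs₀.le _
  rw [div_mul_eq_mul_div, h4]
  have : -s₀ ^ (α + δ + 1) / (α + δ + 1) = s₀ ^ (α + δ + 1) * (1 / (-(α + δ + 1))) := by
    rw [mul_one_div, div_neg, neg_div]
  rw [this]
  have h8 : s₀ ^ (α + δ + 1) / (α + 1) = s₀ ^ (α + δ + 1) * (1 / (α + 1)) := by ring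
  rw [h8, ← mul_add]
  ring_nf
  exact le_refl _

lemma jordan {θ : ℝ} (h1 : 0 < θ) (h2 : θ ≤ π) :
    2 * θ ^ 2 / π ^ 2 ≤ 1 - Real.cos θ := by
  have hπ := Real.pi_pos
  rw [one_sub_cos_eq]
  have h3 : 2 / π * (θ / 2) ≤ Real.sin (θ / 2) :=
    Real.mul_le_sin (by linarith) (by linarith)
  have h4 : 2 / π * (θ / 2) = θ / π := by ring
  rw [h4] at h3
  have h5 : (θ / π) ^ 2 ≤ Real.sin (θ / 2) ^ 2 := by
    apply pow_le_pow_left₀ (by positivity) h3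
  have h6 : (θ / π) ^ 2 = θ ^ 2 / π ^ 2 := div_pow θ π 2
  rw [h6] at h5
  have h7 : 2 * θ ^ 2 / π ^ 2 = 2 * (θ ^ 2 / π ^ 2) := by ring
  rw [h7]
  linarith

lemma aux_DR {τ R q : ℝ} (hτ : 0 < τ) (hR : 0 ≤ R) (hq : q ≤ 0) :
    (τ ^ 2 + R ^ 2) ^ (q / 2) ≤ 2 ^ (-(q / 2)) * (τ + R) ^ q := by
  have h0 : 0 < τ + R := by linarith
  have h1 : 0 < (τ + R) ^ 2 / 2 := by positivity
  have h2 : (τ + R) ^ 2 / 2 ≤ τ ^ 2 + R ^ 2 := by nlinarith [sq_nonneg (τ - R)]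
  have h3 : (τ ^ 2 + R ^ 2) ^ (q / 2) ≤ ((τ + R) ^ 2 / 2) ^ (q / 2) :=
    Real.rpow_le_rpow_of_nonpos h1 h2 (by linarith)
  refine h3.trans (le_of_eq ?_)
  rw [Real.div_rpow (sq_nonneg _) (by norm_num : (0:ℝ) ≤ 2)]
  rw [div_eq_mul_inv, ← Real.rpow_neg (by norm_num : (0:ℝ) ≤ 2)]
  rw [← Real.rpow_natCast (τ + R) 2, ← Real.rpow_mul h0.le]
  rw [show ((2:ℕ):ℝ) * (q / 2) = q by push_cast; ring]
  ring

set_option maxHeartbeats 2000000 in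
lemma kernel_bound1 {lam : ℝ} (hlam : 0 < lam) (m : ℕ) :
    ∃ K : ℝ, 0 < K ∧ ∀ (y z τ : ℝ), 0 < y → 0 < z → 0 < τ →
      ‖iteratedDeriv m (fun σ : ℝ => ((besselPoisson1 lam σ y z : ℝ) : ℂ)) τ‖
        ≤ K * (τ + |y - z|) ^ (-(m:ℝ) - 1) := by
  have hπ := Real.pi_pos
  set p : ℝ := 2 * lam - 1 with hp
  have hp1 : -1 < p := by simp only [hp]; linarith
  set C₀ : ℝ := max 1 ((2 / π) ^ p) with hC₀
  have hC₀1 : (1:ℝ) ≤ C₀ := le_max_left _ _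
  have hC₀0 : (0:ℝ) < C₀ := lt_of_lt_of_le one_pos hC₀1
  set CS : ℝ := coeffSum (LL lam m) with hCSdef
  have hCS : 0 ≤ CS := coeffSum_nonneg _
  set E : ℝ := EE lam m with hEdef
  have hEneg : E < 0 := EE_neg hlam m
  set δ : ℝ := 2 * E with hδdef
  have hδneg : δ < 0 := by simp only [hδdef]; linarith
  have hpq : p + δ + 1 = -(m:ℝ) - 1 := by
    simp only [hp, hδdef, hEdef, EE]; ring
  have hαδ : p + δ + 1 < 0 := by
    rw [hpq]; have : (0:ℝ) ≤ (m:ℝ) := Nat.cast_nonneg m; linarith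
  set Cc : ℝ := 1 / (p + 1) + 1 / (-(p + δ + 1)) with hCc
  have hCc0 : 0 < Cc := by
    have h1 : 0 < p + 1 := by linarith
    have h2 : 0 < -(p + δ + 1) := by linarith
    positivity
  set Aconst : ℝ := (2 * lam / π) * (4 / π ^ 2) ^ (-lam) with hAconst
  have hAconst0 : 0 < Aconst := by positivity
  set K0 : ℝ := C₀ * CS * Cc * Aconst * 2 ^ (((m:ℝ) + 1) / 2) with hK0
  have hK00 : 0 ≤ K0 := by positivity
  refine ⟨K0 + 1, by positivity, ?_⟩
  intro y z τ hy hz hτ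
  set R : ℝ := |y - z| with hR
  have hR0 : 0 ≤ R := abs_nonneg _
  have hτR : 0 < τ + R := by linarith
  -- the weight majorant
  set φ : ℝ → ℝ := fun θ => C₀ * θ ^ p with hφ
  have hφint : IntegrableOn φ (Ioo 0 (π/2)) := by
    have h := intervalIntegral.intervalIntegrable_rpow' (a := 0) (b := π/2) hp1
    rw [intervalIntegrable_iff_integrableOn_Ioc_of_le (by linarith)] at h
    exact MeasureTheory.IntegrableOn.mono_set (h.const_mul C₀) Ioo_subset_Ioc_self
  have hwφ : ∀ θ ∈ Ioo (0:ℝ) (π/2), Real.sin θ ^ (2 * lam - 1) ≤ φ θ := by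
    intro θ hθ
    have h0 : 0 < θ := hθ.1
    have h2 : θ < π / 2 := hθ.2
    have hθp : (0:ℝ) ≤ θ ^ p := Real.rpow_nonneg h0.le p
    rcases le_or_gt 0 p with hp0 | hp0
    · have hs : Real.sin θ ≤ θ := (Real.sin_lt h0).le
      have : Real.sin θ ^ p ≤ θ ^ p :=
        Real.rpow_le_rpow (Real.sin_nonneg_of_nonneg_of_le_pi h0.le (by linarith)) hs hp0
      calc Real.sin θ ^ (2 * lam - 1) = Real.sin θ ^ p := rfl
        _ ≤ θ ^ p := this
        _ ≤ C₀ * θ ^ p := le_mul_of_one_le_left hθp hC₀1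
    · have hs : 2 / π * θ ≤ Real.sin θ := Real.mul_le_sin h0.le (by linarith)
      have hx : (0:ℝ) < 2 / π * θ := by positivity
      have h1 : Real.sin θ ^ p ≤ (2 / π * θ) ^ p :=
        Real.rpow_le_rpow_of_nonpos hx hs hp0.le
      have h2' : (2 / π * θ) ^ p = (2 / π) ^ p * θ ^ p :=
        Real.mul_rpow (by positivity) h0.le
      calc Real.sin θ ^ (2 * lam - 1) = Real.sin θ ^ p := rfl
        _ ≤ (2 / π) ^ p * θ ^ p := by rw [← h2']; exact h1
        _ ≤ C₀ * θ ^ p := mul_le_mul_of_nonneg_right (le_max_right _ _) hθp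
  -- identify the iterated derivative
  have hb2 : π / 2 ≤ π := by linarith
  have hID := iteratedDeriv_eq hlam hy hz (le_refl (0:ℝ)) hb2 hφint hwφ m τ hτ
  have hbp1 : (fun σ : ℝ => ((besselPoisson1 lam σ y z : ℝ) : ℂ))
      = (fun σ : ℝ => ((besselPoissonPart lam 0 (π/2) σ y z : ℝ) : ℂ)) := rfl
  rw [hbp1, hID, Complex.norm_real, Real.norm_eq_abs]
  set A : ℝ := 2 * lam * (y * z) ^ lam / π with hA
  have hA0 : 0 < A := by positivity
  -- geometric quantities
  set D2 : ℝ := τ ^ 2 + (y - z) ^ 2 with hD2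
  have hD20 : 0 < D2 := by positivity
  set κ : ℝ := 4 * y * z / π ^ 2 with hκ
  have hκ0 : 0 < κ := by positivity
  set s₀ : ℝ := Real.sqrt (D2 / κ) with hs₀def
  have hs₀ : 0 < s₀ := Real.sqrt_pos.2 (by positivity)
  have hs₀sq : s₀ ^ 2 = D2 / κ := Real.sq_sqrt (by positivity)
  have core := core_lemma hp1 hδneg hαδ hs₀
  have hκE : (0:ℝ) ≤ κ ^ E := Real.rpow_nonneg hκ0.le E
  -- pointwise domination of the kernel term
  have key0 : ∀ θ ∈ Ioo (0:ℝ) (π/2), (τ ^ 2 + bb y z θ) ^ E ≤ κ ^ E * min (s₀ ^ δ) (θ ^ δ) := by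
    intro θ hθ
    have h0 : 0 < θ := hθ.1
    have h2 : θ < π / 2 := hθ.2
    have hcos : 2 * θ ^ 2 / π ^ 2 ≤ 1 - Real.cos θ := jordan h0 (by linarith)
    have hbbθ : 0 < bb y z θ := bb_pos hy hz h0 (by linarith)
    have hDe : κ ^ E * s₀ ^ δ = D2 ^ E := by
      have hD2e : D2 = κ * s₀ ^ 2 := by rw [hs₀sq]; field_simp
      rw [hD2e, Real.mul_rpow hκ0.le (sq_nonneg _)]
      congr 1
      rw [← Real.rpow_natCast s₀ 2, ← Real.rpow_mul hs₀.le]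
      simp only [hδdef]
      norm_num
    have hκθ : κ ^ E * θ ^ δ = (κ * θ ^ 2) ^ E := by
      rw [Real.mul_rpow hκ0.le (sq_nonneg _)]
      congr 1
      rw [← Real.rpow_natCast θ 2, ← Real.rpow_mul h0.le]
      simp only [hδdef]
      norm_num
    rcases le_total (s₀ ^ δ) (θ ^ δ) with hmin | hmin
    · rw [min_eq_left hmin, hDe]
      refine Real.rpow_le_rpow_of_nonpos hD20 ?_ hEneg.le
      have : (0:ℝ) ≤ 2 * y * z * (1 - Real.cos θ) := by
        have := Real.cos_le_one θ
        apply mul_nonneg (by positivity); linarith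
      simp only [hD2, bb]; linarith
    · rw [min_eq_right hmin, hκθ]
      refine Real.rpow_le_rpow_of_nonpos (by positivity) ?_ hEneg.le
      have hineq : κ * θ ^ 2 ≤ 2 * y * z * (1 - Real.cos θ) := by
        have h3 : 2 * y * z * (2 * θ ^ 2 / π ^ 2) ≤ 2 * y * z * (1 - Real.cos θ) := by
          apply mul_le_mul_of_nonneg_left hcos (by positivity)
        calc κ * θ ^ 2 = 2 * y * z * (2 * θ ^ 2 / π ^ 2) := by
              simp only [hκ]; ring
          _ ≤ 2 * y * z * (1 - Real.cos θ) := h3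
      simp only [bb]; linarith [sq_nonneg τ, sq_nonneg (y - z), hineq]
  -- bound |JJ|
  have hJJ : |JJ lam 0 (π/2) y z m τ|
      ≤ (C₀ * CS * κ ^ E) * ((1/(p+1) + 1/(-(p+δ+1))) * s₀ ^ (p + δ + 1)) := by
    have step1 : |JJ lam 0 (π/2) y z m τ|
        ≤ ∫ θ in Ioo (0:ℝ) (π/2),
            |Real.sin θ ^ (2 * lam - 1) * evalL (LL lam m) τ (bb y z θ)| := by
      have := MeasureTheory.norm_integral_le_integral_norm
        (f := fun θ => Real.sin θ ^ (2 * lam - 1) * evalL (LL lam m) τ (bb y z θ))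
        (μ := volume.restrict (Ioo (0:ℝ) (π/2)))
      simpa only [Real.norm_eq_abs, JJ] using this
    have step2 : ∫ θ in Ioo (0:ℝ) (π/2),
          |Real.sin θ ^ (2 * lam - 1) * evalL (LL lam m) τ (bb y z θ)|
        ≤ ∫ θ in Ioo (0:ℝ) (π/2),
            (C₀ * CS * κ ^ E) * (θ ^ p * min (s₀ ^ δ) (θ ^ δ)) := by
      refine integral_mono_of_nonneg
        (Filter.Eventually.of_forall fun θ => abs_nonneg _)
        ((MeasureTheory.IntegrableOn.mono_set (core.1.const_mul (C₀ * CS * κ ^ E))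
          (fun θ hθ => hθ.1)))
        ?_
      filter_upwards [ae_restrict_mem measurableSet_Ioo] with θ hθ
      have h0 : 0 < θ := hθ.1
      have hsin : 0 < Real.sin θ :=
        Real.sin_pos_of_pos_of_lt_pi h0 (by linarith [hθ.2])
      have hw0 : 0 ≤ Real.sin θ ^ (2 * lam - 1) := Real.rpow_nonneg hsin.le _
      have hbbθ : 0 < bb y z θ := bb_pos hy hz h0 (by linarith [hθ.2])
      have h1 : |evalL (LL lam m) τ (bb y z θ)| ≤ CS * (τ ^ 2 + bb y z θ) ^ E :=
        abs_evalL_le (inv_LL hlam m) hbbθ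
      have h2 := key0 θ hθ
      calc |Real.sin θ ^ (2 * lam - 1) * evalL (LL lam m) τ (bb y z θ)|
          = Real.sin θ ^ (2 * lam - 1) * |evalL (LL lam m) τ (bb y z θ)| := by
            rw [abs_mul, abs_of_nonneg hw0]
        _ ≤ φ θ * (CS * (κ ^ E * min (s₀ ^ δ) (θ ^ δ))) := by
            refine mul_le_mul (hwφ θ hθ) (h1.trans ?_) (abs_nonneg _)
              (le_trans hw0 (hwφ θ hθ))
            exact mul_le_mul_of_nonneg_left h2 hCS
        _ = (C₀ * CS * κ ^ E) * (θ ^ p * min (s₀ ^ δ) (θ ^ δ)) := by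
            simp only [hφ]; ring
    have step3 : ∫ θ in Ioo (0:ℝ) (π/2),
          (C₀ * CS * κ ^ E) * (θ ^ p * min (s₀ ^ δ) (θ ^ δ))
        ≤ ∫ θ in Ioi (0:ℝ), (C₀ * CS * κ ^ E) * (θ ^ p * min (s₀ ^ δ) (θ ^ δ)) := by
      refine setIntegral_mono_set (core.1.const_mul _) ?_
        (HasSubset.Subset.eventuallyLE (fun θ hθ => hθ.1))
      filter_upwards [ae_restrict_mem measurableSet_Ioi] with θ hθ
      have h0 : (0:ℝ) < θ := hθ
      have : (0:ℝ) ≤ min (s₀ ^ δ) (θ ^ δ) :=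
        le_min (Real.rpow_nonneg hs₀.le _) (Real.rpow_nonneg h0.le _)
      positivity
    have step4 : ∫ θ in Ioi (0:ℝ), (C₀ * CS * κ ^ E) * (θ ^ p * min (s₀ ^ δ) (θ ^ δ))
        ≤ (C₀ * CS * κ ^ E) * ((1/(p+1) + 1/(-(p+δ+1))) * s₀ ^ (p + δ + 1)) := by
      rw [MeasureTheory.integral_const_mul]
      exact mul_le_mul_of_nonneg_left core.2 (by positivity)
    exact ((step1.trans step2).trans step3).trans step4
  -- final arithmetic
  have hs₀q : s₀ ^ (p + δ + 1) = D2 ^ ((-(m:ℝ) - 1)/2) * κ ^ (((m:ℝ) + 1)/2) := by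
    rw [hpq]
    have h1 : s₀ = (D2 / κ) ^ ((1:ℝ)/2) := by
      rw [hs₀def, Real.sqrt_eq_rpow]
    rw [h1, ← Real.rpow_mul (by positivity)]
    rw [show (1:ℝ)/2 * (-(m:ℝ) - 1) = (-(m:ℝ) - 1)/2 by ring]
    rw [Real.div_rpow hD20.le hκ0.le]
    rw [div_eq_mul_inv, ← Real.rpow_neg hκ0.le]
    rw [show -((-(m:ℝ) - 1)/2) = ((m:ℝ) + 1)/2 by ring]
  have hκcomb : κ ^ E * κ ^ (((m:ℝ) + 1)/2) = κ ^ (-lam) := by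
    rw [← Real.rpow_add hκ0]
    congr 1
    simp only [hEdef, EE]; ring
  have hAκ : A * κ ^ (-lam) = Aconst := by
    have h1 : κ = (4 / π ^ 2) * (y * z) := by simp only [hκ]; ring
    rw [h1, Real.mul_rpow (by positivity) (by positivity)]
    have h2 : (y * z) ^ lam * (y * z) ^ (-lam) = 1 := by
      rw [← Real.rpow_add (by positivity)]
      simp
    simp only [hA, hAconst]
    field_simp
    exact h2
  have hDbound : D2 ^ ((-(m:ℝ) - 1)/2) ≤ 2 ^ (((m:ℝ) + 1)/2) * (τ + R) ^ (-(m:ℝ) - 1) := by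
    have h := aux_DR (R := R) hτ hR0 (show -(m:ℝ) - 1 ≤ 0 by
      have : (0:ℝ) ≤ (m:ℝ) := Nat.cast_nonneg m; linarith)
    have hRR : R ^ 2 = (y - z) ^ 2 := sq_abs _
    rw [show -((-(m:ℝ) - 1)/2) = ((m:ℝ) + 1)/2 by ring] at h
    simpa [hD2, hRR] using h
  calc |A * JJ lam 0 (π/2) y z m τ|
      = A * |JJ lam 0 (π/2) y z m τ| := by rw [abs_mul, abs_of_nonneg hA0.le]
    _ ≤ A * ((C₀ * CS * κ ^ E) * (Cc * s₀ ^ (p + δ + 1))) :=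
        mul_le_mul_of_nonneg_left hJJ hA0.le
    _ = (C₀ * CS * Cc) * (A * (κ ^ E * s₀ ^ (p + δ + 1))) := by ring
    _ = (C₀ * CS * Cc) * (A * (κ ^ (-lam) * D2 ^ ((-(m:ℝ) - 1)/2))) := by
        rw [hs₀q, show κ ^ E * (D2 ^ ((-(m:ℝ) - 1)/2) * κ ^ (((m:ℝ) + 1)/2))
          = (κ ^ E * κ ^ (((m:ℝ) + 1)/2)) * D2 ^ ((-(m:ℝ) - 1)/2) by ring, hκcomb]
    _ = (C₀ * CS * Cc * Aconst) * D2 ^ ((-(m:ℝ) - 1)/2) := by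
        rw [show A * (κ ^ (-lam) * D2 ^ ((-(m:ℝ) - 1)/2))
          = (A * κ ^ (-lam)) * D2 ^ ((-(m:ℝ) - 1)/2) by ring, hAκ]
        ring
    _ ≤ (C₀ * CS * Cc * Aconst) * (2 ^ (((m:ℝ) + 1)/2) * (τ + R) ^ (-(m:ℝ) - 1)) := by
        apply mul_le_mul_of_nonneg_left hDbound (by positivity)
    _ = K0 * (τ + R) ^ (-(m:ℝ) - 1) := by rw [hK0]; ring
    _ ≤ (K0 + 1) * (τ + R) ^ (-(m:ℝ) - 1) := by
        have h9 : (0:ℝ) ≤ (τ + R) ^ (-(m:ℝ) - 1) := Real.rpow_nonneg hτR.le _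
        exact mul_le_mul_of_nonneg_right (by linarith) h9

set_option maxHeartbeats 2000000 in
lemma kernel_bound2 {lam : ℝ} (hlam : 0 < lam) (m : ℕ) :
    ∃ K : ℝ, 0 < K ∧ ∀ (y z τ : ℝ), 0 < y → 0 < z → 0 < τ →
      ‖iteratedDeriv m (fun σ : ℝ => ((besselPoisson2 lam σ y z : ℝ) : ℂ)) τ‖
        ≤ K * (τ + (y + z)) ^ (-(m:ℝ) - 1) := by
  have hπ := Real.pi_pos
  set p : ℝ := 2 * lam - 1 with hp
  have hp1 : -1 < p := by simp only [hp]; linarith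
  set C₀ : ℝ := max 1 ((2 / π) ^ p) with hC₀
  have hC₀1 : (1:ℝ) ≤ C₀ := le_max_left _ _
  have hC₀0 : (0:ℝ) < C₀ := lt_of_lt_of_le one_pos hC₀1
  set CS : ℝ := coeffSum (LL lam m) with hCSdef
  have hCS : 0 ≤ CS := coeffSum_nonneg _
  set E : ℝ := EE lam m with hEdef
  have hEneg : E < 0 := EE_neg hlam m
  set Iw : ℝ := ∫ θ in Ioo (π/2) π, (π - θ) ^ p with hIw
  have hIw0 : 0 ≤ Iw := by
    refine setIntegral_nonneg measurableSet_Ioo fun θ hθ => ?_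
    exact Real.rpow_nonneg (by linarith [hθ.2]) p
  set K0 : ℝ := (2 * lam / π) * (4:ℝ) ^ (-lam) * (4:ℝ) ^ (-E) * CS * C₀ * Iw with hK0
  have hK00 : 0 ≤ K0 := by positivity
  refine ⟨K0 + 1, by positivity, ?_⟩
  intro y z τ hy hz hτ
  set S : ℝ := y + z with hS
  have hS0 : 0 < S := by simp only [hS]; linarith
  have hτS : 0 < τ + S := by linarith
  -- majorant weight
  set φ : ℝ → ℝ := fun θ => C₀ * (π - θ) ^ p with hφ
  have hφint : IntegrableOn φ (Ioo (π/2) π) := by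
    have h := intervalIntegral.intervalIntegrable_rpow' (a := 0) (b := π/2) hp1
    have h2 := (h.comp_sub_left π).symm
    have e1 : π - π / 2 = π / 2 := by ring
    rw [e1, sub_zero] at h2
    rw [intervalIntegrable_iff_integrableOn_Ioc_of_le (by linarith)] at h2
    exact MeasureTheory.IntegrableOn.mono_set (h2.const_mul C₀) Ioo_subset_Ioc_self
  have hwφ : ∀ θ ∈ Ioo (π/2) π, Real.sin θ ^ (2 * lam - 1) ≤ φ θ := by
    intro θ hθ
    have h0 : π / 2 < θ := hθ.1
    have h2 : θ < π := hθ.2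
    have hsub0 : 0 < π - θ := by linarith
    have hsub2 : π - θ < π / 2 := by linarith
    have hsin : Real.sin θ = Real.sin (π - θ) := (Real.sin_pi_sub θ).symm
    have hθp : (0:ℝ) ≤ (π - θ) ^ p := Real.rpow_nonneg hsub0.le p
    rcases le_or_gt 0 p with hp0 | hp0
    · have hs : Real.sin (π - θ) ≤ π - θ := (Real.sin_lt hsub0).le
      have : Real.sin (π - θ) ^ p ≤ (π - θ) ^ p :=
        Real.rpow_le_rpow (Real.sin_nonneg_of_nonneg_of_le_pi hsub0.le (by linarith)) hs hp0
      calc Real.sin θ ^ (2 * lam - 1) = Real.sin (π - θ) ^ p := by rw [← hsin]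
        _ ≤ (π - θ) ^ p := this
        _ ≤ C₀ * (π - θ) ^ p := le_mul_of_one_le_left hθp hC₀1
    · have hs : 2 / π * (π - θ) ≤ Real.sin (π - θ) :=
        Real.mul_le_sin hsub0.le (by linarith)
      have hx : (0:ℝ) < 2 / π * (π - θ) := by positivity
      have h1 : Real.sin (π - θ) ^ p ≤ (2 / π * (π - θ)) ^ p :=
        Real.rpow_le_rpow_of_nonpos hx hs hp0.le
      have h2' : (2 / π * (π - θ)) ^ p = (2 / π) ^ p * (π - θ) ^ p :=
        Real.mul_rpow (by positivity) hsub0.le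
      calc Real.sin θ ^ (2 * lam - 1) = Real.sin (π - θ) ^ p := by rw [← hsin]
        _ ≤ (2 / π) ^ p * (π - θ) ^ p := by rw [← h2']; exact h1
        _ ≤ C₀ * (π - θ) ^ p := mul_le_mul_of_nonneg_right (le_max_right _ _) hθp
  -- identify the iterated derivative
  have hID := iteratedDeriv_eq hlam hy hz (le_of_lt (by positivity : (0:ℝ) < π/2))
    (le_refl π) hφint hwφ m τ hτ
  have hbp2 : (fun σ : ℝ => ((besselPoisson2 lam σ y z : ℝ) : ℂ))
      = (fun σ : ℝ => ((besselPoissonPart lam (π/2) π σ y z : ℝ) : ℂ)) := rfl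
  rw [hbp2, hID, Complex.norm_real, Real.norm_eq_abs]
  set A : ℝ := 2 * lam * (y * z) ^ lam / π with hA
  have hA0 : 0 < A := by positivity
  have hQ : (0:ℝ) < (τ + S) ^ 2 / 4 := by positivity
  -- lower bound for the denominator
  have hlow : ∀ θ ∈ Ioo (π/2) π, (τ + S) ^ 2 / 4 ≤ τ ^ 2 + bb y z θ := by
    intro θ hθ
    have hcos : Real.cos θ ≤ 0 :=
      Real.cos_nonpos_of_pi_div_two_le_of_le hθ.1.le (by linarith [hθ.2])
    have h1 : 2 * y * z ≤ 2 * y * z * (1 - Real.cos θ) := by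
      have h0 : (0:ℝ) ≤ 2 * y * z * (-Real.cos θ) := mul_nonneg (by positivity) (by linarith)
      nlinarith
    have h2 : y ^ 2 + z ^ 2 ≤ bb y z θ := by
      simp only [bb]; nlinarith
    have h3 : (τ + S) ^ 2 / 4 ≤ τ ^ 2 + y ^ 2 + z ^ 2 := by
      simp only [hS]
      nlinarith [sq_nonneg (τ - y - z), sq_nonneg (y - z)]
    linarith
  -- bound |JJ|
  have hJJ : |JJ lam (π/2) π y z m τ|
      ≤ (C₀ * CS * ((τ + S) ^ 2 / 4) ^ E) * Iw := by
    have step1 : |JJ lam (π/2) π y z m τ|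
        ≤ ∫ θ in Ioo (π/2) π,
            |Real.sin θ ^ (2 * lam - 1) * evalL (LL lam m) τ (bb y z θ)| := by
      have := MeasureTheory.norm_integral_le_integral_norm
        (f := fun θ => Real.sin θ ^ (2 * lam - 1) * evalL (LL lam m) τ (bb y z θ))
        (μ := volume.restrict (Ioo (π/2) π))
      simpa only [Real.norm_eq_abs, JJ] using this
    have step2 : ∫ θ in Ioo (π/2) π,
          |Real.sin θ ^ (2 * lam - 1) * evalL (LL lam m) τ (bb y z θ)|
        ≤ ∫ θ in Ioo (π/2) π,
            (C₀ * CS * ((τ + S) ^ 2 / 4) ^ E) * (π - θ) ^ p := by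
      refine integral_mono_of_nonneg
        (Filter.Eventually.of_forall fun θ => abs_nonneg _)
        (MeasureTheory.IntegrableOn.congr_fun
          (hφint.const_mul (CS * ((τ + S) ^ 2 / 4) ^ E))
          (fun θ _ => by simp only [hφ]; ring) measurableSet_Ioo)
        ?_
      filter_upwards [ae_restrict_mem measurableSet_Ioo] with θ hθ
      have h0 : π / 2 < θ := hθ.1
      have hsin : 0 < Real.sin θ :=
        Real.sin_pos_of_pos_of_lt_pi (by linarith) hθ.2
      have hw0 : 0 ≤ Real.sin θ ^ (2 * lam - 1) := Real.rpow_nonneg hsin.le _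
      have hbbθ : 0 < bb y z θ := bb_pos hy hz (by linarith) hθ.2
      have h1 : |evalL (LL lam m) τ (bb y z θ)| ≤ CS * (τ ^ 2 + bb y z θ) ^ E :=
        abs_evalL_le (inv_LL hlam m) hbbθ
      have h2 : (τ ^ 2 + bb y z θ) ^ E ≤ ((τ + S) ^ 2 / 4) ^ E :=
        Real.rpow_le_rpow_of_nonpos hQ (hlow θ hθ) hEneg.le
      calc |Real.sin θ ^ (2 * lam - 1) * evalL (LL lam m) τ (bb y z θ)|
          = Real.sin θ ^ (2 * lam - 1) * |evalL (LL lam m) τ (bb y z θ)| := by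
            rw [abs_mul, abs_of_nonneg hw0]
        _ ≤ φ θ * (CS * ((τ + S) ^ 2 / 4) ^ E) := by
            refine mul_le_mul (hwφ θ hθ) (h1.trans ?_) (abs_nonneg _)
              (le_trans hw0 (hwφ θ hθ))
            exact mul_le_mul_of_nonneg_left h2 hCS
        _ = (C₀ * CS * ((τ + S) ^ 2 / 4) ^ E) * (π - θ) ^ p := by
            simp only [hφ]; ring
    have step3 : ∫ θ in Ioo (π/2) π,
          (C₀ * CS * ((τ + S) ^ 2 / 4) ^ E) * (π - θ) ^ p
        = (C₀ * CS * ((τ + S) ^ 2 / 4) ^ E) * Iw := by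
      rw [MeasureTheory.integral_const_mul]
    exact (step1.trans step2).trans (le_of_eq step3)
  -- final arithmetic
  have hcomb : A * ((C₀ * CS * ((τ + S) ^ 2 / 4) ^ E) * Iw)
      ≤ K0 * (τ + S) ^ (-(m:ℝ) - 1) := by
    have hAle : A ≤ (2 * lam / π) * (4:ℝ) ^ (-lam) * (τ + S) ^ (2 * lam) := by
      have h1 : y * z ≤ (τ + S) ^ 2 / 4 := by
        simp only [hS]; nlinarith [sq_nonneg (y - z), sq_nonneg (τ + y + z), sq_nonneg τ]
      have h2 : (y * z) ^ lam ≤ ((τ + S) ^ 2 / 4) ^ lam :=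
        Real.rpow_le_rpow (by positivity) h1 hlam.le
      have h3 : ((τ + S) ^ 2 / 4) ^ lam = (4:ℝ) ^ (-lam) * (τ + S) ^ (2 * lam) := by
        rw [Real.div_rpow (sq_nonneg _) (by norm_num), ← Real.rpow_natCast (τ + S) 2,
          ← Real.rpow_mul hτS.le, div_eq_mul_inv, ← Real.rpow_neg (by norm_num)]
        push_cast
        ring_nf
      calc A = (2 * lam / π) * (y * z) ^ lam := by simp only [hA]; ring
        _ ≤ (2 * lam / π) * ((τ + S) ^ 2 / 4) ^ lam :=
            mul_le_mul_of_nonneg_left h2 (by positivity)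
        _ = (2 * lam / π) * (4:ℝ) ^ (-lam) * (τ + S) ^ (2 * lam) := by rw [h3]; ring
    have hQE : ((τ + S) ^ 2 / 4) ^ E = (4:ℝ) ^ (-E) * (τ + S) ^ (2 * E) := by
      rw [Real.div_rpow (sq_nonneg _) (by norm_num), ← Real.rpow_natCast (τ + S) 2,
        ← Real.rpow_mul hτS.le, div_eq_mul_inv, ← Real.rpow_neg (by norm_num)]
      push_cast
      ring_nf
    have hexp : (τ + S) ^ (2 * lam) * (τ + S) ^ (2 * E) = (τ + S) ^ (-(m:ℝ) - 1) := by
      rw [← Real.rpow_add hτS]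
      congr 1
      simp only [hEdef, EE]; ring
    have hfinal : A * ((C₀ * CS * ((τ + S) ^ 2 / 4) ^ E) * Iw)
        ≤ ((2 * lam / π) * (4:ℝ) ^ (-lam) * (τ + S) ^ (2 * lam))
            * ((C₀ * CS * ((τ + S) ^ 2 / 4) ^ E) * Iw) := by
      refine mul_le_mul_of_nonneg_right hAle ?_
      have : (0:ℝ) ≤ ((τ + S) ^ 2 / 4) ^ E := Real.rpow_nonneg hQ.le E
      positivity
    refine hfinal.trans (le_of_eq ?_)
    rw [hQE, hK0]
    calc (2 * lam / π) * (4:ℝ) ^ (-lam) * (τ + S) ^ (2 * lam)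
          * ((C₀ * CS * ((4:ℝ) ^ (-E) * (τ + S) ^ (2 * E))) * Iw)
        = (2 * lam / π) * (4:ℝ) ^ (-lam) * (4:ℝ) ^ (-E) * CS * C₀ * Iw
            * ((τ + S) ^ (2 * lam) * (τ + S) ^ (2 * E)) := by ring
      _ = (2 * lam / π) * (4:ℝ) ^ (-lam) * (4:ℝ) ^ (-E) * CS * C₀ * Iw
            * (τ + S) ^ (-(m:ℝ) - 1) := by rw [hexp]
  calc |A * JJ lam (π/2) π y z m τ|
      = A * |JJ lam (π/2) π y z m τ| := by rw [abs_mul, abs_of_nonneg hA0.le]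
    _ ≤ A * ((C₀ * CS * ((τ + S) ^ 2 / 4) ^ E) * Iw) :=
        mul_le_mul_of_nonneg_left hJJ hA0.le
    _ ≤ K0 * (τ + S) ^ (-(m:ℝ) - 1) := hcomb
    _ ≤ (K0 + 1) * (τ + S) ^ (-(m:ℝ) - 1) := by
        have h9 : (0:ℝ) ≤ (τ + S) ^ (-(m:ℝ) - 1) := Real.rpow_nonneg hτS.le _
        exact mul_le_mul_of_nonneg_right (by linarith) h9

lemma fracOrder_lt {β : ℝ} (hβ : 0 < β) : β < (fracOrder β : ℝ) := by
  have h1 : (0:ℤ) ≤ ⌊β⌋ := Int.floor_nonneg.2 hβ.le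
  have h4 : ((⌊β⌋.toNat : ℕ) : ℝ) = ((⌊β⌋ : ℤ) : ℝ) := by
    rw [← Int.cast_natCast, Int.toNat_of_nonneg h1]
  have h2 : β < (⌊β⌋ : ℝ) + 1 := Int.lt_floor_add_one β
  unfold fracOrder
  push_cast
  rw [h4]
  exact h2

set_option maxHeartbeats 1000000 in
lemma fracDeriv_abs_le {β : ℝ} (hβ : 0 < β) {F : ℝ → ℂ} {K R : ℝ} (hK : 0 ≤ K) (hR : 0 ≤ R)
    (hF : ∀ τ : ℝ, 0 < τ → ‖iteratedDeriv (fracOrder β) F τ‖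
      ≤ K * (τ + R) ^ (-(fracOrder β : ℝ) - 1))
    {t : ℝ} (ht : 0 < t) :
    ‖fracDeriv β F t‖
      ≤ (1 / Real.Gamma ((fracOrder β : ℝ) - β))
        * (K * ((1/((fracOrder β : ℝ) - β) + 1/(β+1)) * (t + R) ^ (-β - 1))) := by
  set m : ℕ := fracOrder β with hm
  set σ : ℝ := (m:ℝ) - β with hσ
  have hσ0 : 0 < σ := by simp only [hσ]; linarith [fracOrder_lt hβ]
  have hΓ : 0 < Real.Gamma σ := Real.Gamma_pos_of_pos hσ0
  have htR : 0 < t + R := by linarith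
  set δm : ℝ := -(m:ℝ) - 1 with hδm
  have hδm0 : δm < 0 := by
    have : (0:ℝ) ≤ (m:ℝ) := Nat.cast_nonneg m
    simp only [hδm]; linarith
  have hα : -1 < σ - 1 := by linarith
  have hαδ : (σ - 1) + δm + 1 < 0 := by simp only [hσ, hδm]; linarith
  have core := core_lemma hα hδm0 hαδ htR
  have hexp : (σ - 1) + δm + 1 = -β - 1 := by simp only [hσ, hδm]; ring
  -- the constant prefactor
  have hcast : ((m : ℂ) - (β : ℂ)) = ((σ : ℝ) : ℂ) := by push_cast [hσ]; ring
  have habs_c : ‖Complex.exp (-(Complex.I * (π : ℂ) * ((m : ℂ) - (β : ℂ))))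
      / Complex.Gamma ((m : ℂ) - (β : ℂ))‖ = 1 / Real.Gamma σ := by
    rw [norm_div]
    congr 1
    · rw [Complex.norm_exp]
      have : (-(Complex.I * (π : ℂ) * ((m : ℂ) - (β : ℂ)))).re = 0 := by
        rw [hcast]
        simp [Complex.mul_re, Complex.I_re, Complex.I_im]
      rw [this, Real.exp_zero]
    · rw [hcast, Complex.Gamma_ofReal, Complex.norm_real, Real.norm_eq_abs, abs_of_pos hΓ]
  -- bound the integral
  have hbound : ‖∫ s in Ioi (0:ℝ), iteratedDeriv m F (t + s)
        * ((s ^ ((m:ℝ) - β - 1) : ℝ) : ℂ)‖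
      ≤ K * ((1/((σ - 1) + 1) + 1/(-((σ - 1) + δm + 1))) * (t + R) ^ ((σ - 1) + δm + 1)) := by
    refine (MeasureTheory.norm_integral_le_integral_norm _).trans ?_
    have step : ∫ s in Ioi (0:ℝ), ‖iteratedDeriv m F (t + s) * ((s ^ ((m:ℝ) - β - 1) : ℝ) : ℂ)‖
        ≤ ∫ s in Ioi (0:ℝ), K * (s ^ (σ - 1) * min ((t + R) ^ δm) (s ^ δm)) := by
      refine integral_mono_of_nonneg
        (Filter.Eventually.of_forall fun s => norm_nonneg _)
        (core.1.const_mul K) ?_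
      filter_upwards [ae_restrict_mem measurableSet_Ioi] with s hs
      have hs0 : (0:ℝ) < s := hs
      have hts : 0 < t + s := by linarith
      have e1 : ‖iteratedDeriv m F (t + s) * ((s ^ ((m:ℝ) - β - 1) : ℝ) : ℂ)‖
          = ‖iteratedDeriv m F (t + s)‖ * s ^ (σ - 1) := by
        rw [norm_mul, Complex.norm_real, Real.norm_eq_abs,
          abs_of_nonneg (Real.rpow_nonneg hs0.le _)]
      rw [e1]
      have h2 : ‖iteratedDeriv m F (t + s)‖ ≤ K * (t + s + R) ^ δm := by
        have := hF (t + s) hts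
        simpa only [hδm] using this
      have h3 : (t + s + R) ^ δm ≤ min ((t + R) ^ δm) (s ^ δm) := by
        refine le_min ?_ ?_
        · exact Real.rpow_le_rpow_of_nonpos htR (by linarith) hδm0.le
        · exact Real.rpow_le_rpow_of_nonpos hs0 (by linarith) hδm0.le
      calc ‖iteratedDeriv m F (t + s)‖ * s ^ (σ - 1)
          ≤ (K * (t + s + R) ^ δm) * s ^ (σ - 1) :=
            mul_le_mul_of_nonneg_right h2 (Real.rpow_nonneg hs0.le _)
        _ ≤ (K * min ((t + R) ^ δm) (s ^ δm)) * s ^ (σ - 1) := by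
            refine mul_le_mul_of_nonneg_right ?_ (Real.rpow_nonneg hs0.le _)
            exact mul_le_mul_of_nonneg_left h3 hK
        _ = K * (s ^ (σ - 1) * min ((t + R) ^ δm) (s ^ δm)) := by ring
    refine step.trans ?_
    rw [MeasureTheory.integral_const_mul]
    exact mul_le_mul_of_nonneg_left core.2 hK
  -- assemble
  unfold fracDeriv
  rw [norm_mul]
  rw [show ((fracOrder β : ℂ) - (β : ℂ)) = ((m : ℂ) - (β : ℂ)) by rw [hm]]
  rw [habs_c]
  have h5 : ‖∫ s in Ioi (0:ℝ), iteratedDeriv (fracOrder β) F (t + s)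
      * ((s ^ ((fracOrder β : ℝ) - β - 1) : ℝ) : ℂ)‖
      ≤ K * ((1/((σ - 1) + 1) + 1/(-((σ - 1) + δm + 1))) * (t + R) ^ ((σ - 1) + δm + 1)) := by
    exact hbound
  have h6 : (1/((σ - 1) + 1) + 1/(-((σ - 1) + δm + 1))) * (t + R) ^ ((σ - 1) + δm + 1)
      = (1/((fracOrder β : ℝ) - β) + 1/(β+1)) * (t + R) ^ (-β - 1) := by
    have e2 : (σ - 1) + 1 = (fracOrder β : ℝ) - β := by rw [hσ, hm]; ring
    have e3 : -((σ - 1) + δm + 1) = β + 1 := by rw [hσ, hδm, hm]; ring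
    rw [hexp] at e3 ⊢
    rw [e2, e3]
  rw [h6] at h5
  have h7 : 0 ≤ (1 / Real.Gamma σ) := by positivity
  calc (1 / Real.Gamma σ) * ‖∫ s in Ioi (0:ℝ), iteratedDeriv (fracOrder β) F (t + s)
        * ((s ^ ((fracOrder β : ℝ) - β - 1) : ℝ) : ℂ)‖
      ≤ (1 / Real.Gamma σ) * (K * ((1/((fracOrder β : ℝ) - β) + 1/(β+1)) * (t + R) ^ (-β - 1))) :=
        mul_le_mul_of_nonneg_left h5 h7
    _ = (1 / Real.Gamma ((fracOrder β : ℝ) - β))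
        * (K * ((1/((fracOrder β : ℝ) - β) + 1/(β+1)) * (t + R) ^ (-β - 1))) := by
        rw [hσ]

set_option maxHeartbeats 1000000 in
lemma final_bound {β x Rx K5 : ℝ} (hβ : 0 < β) (hRx : 0 < Rx) (hK5 : 0 ≤ K5)
    {G : ℝ → ℝ → ℂ}
    (hG : ∀ t y : ℝ, 0 < t → 0 < y → |x - y| < t →
      ‖G t y‖ ≤ K5 * t ^ β * ((t + Rx)/2) ^ (-β - 1)) :
    ∫ t in Ioi (0:ℝ), ∫ y in Ioi (0:ℝ),
        (if |x - y| < t then ‖G t y‖ ^ 2 / t ^ 2 else 0)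
      ≤ (K5^2 * 2^(2*β+2) * 2 * (1/(2*β) + 1/2)) * Rx ^ (-2:ℝ) := by
  set δ2 : ℝ := -2*β - 2 with hδ2def
  have hδ2 : δ2 < 0 := by simp only [hδ2def]; linarith
  have hα2 : -1 < 2*β - 1 := by linarith
  have hαδ2 : (2*β - 1) + δ2 + 1 < 0 := by simp only [hδ2def]; linarith
  have core2 := core_lemma hα2 hδ2 hαδ2 hRx
  set K6 : ℝ := K5^2 * 2^(2*β+2) * 2 with hK6def
  have hK6 : 0 ≤ K6 := by positivity
  have h_nonneg : ∀ t y : ℝ, 0 ≤ (if |x - y| < t then ‖G t y‖ ^ 2 / t ^ 2 else 0) := by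
    intro t y; split <;> positivity
  have hinner : ∀ t : ℝ, 0 < t →
      (∫ y in Ioi (0:ℝ), (if |x - y| < t then ‖G t y‖ ^ 2 / t ^ 2 else 0))
        ≤ K6 * (t ^ (2*β - 1) * min (Rx ^ δ2) (t ^ δ2)) := by
    intro t ht
    have htRx : 0 < (t + Rx)/2 := by linarith
    set Q : ℝ := ((t + Rx)/2) ^ (-β - 1) with hQdef
    have hQ0 : 0 ≤ Q := Real.rpow_nonneg htRx.le _
    set ct : ℝ := (K5 * t ^ β * Q)^2 / t^2 with hctdef
    have hct0 : 0 ≤ ct := by positivity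
    have hIind : Integrable ((Ioo (x - t) (x + t)).indicator (fun _ => ct))
        (volume.restrict (Ioi 0)) := by
      have h1 : IntegrableOn (fun _ : ℝ => ct) (Ioo (x - t) (x + t)) := by
        refine integrableOn_const ?_
        exact measure_Ioo_lt_top.ne
      exact (h1.integrable_indicator measurableSet_Ioo).restrict
    have step1 : (∫ y in Ioi (0:ℝ), (if |x - y| < t then ‖G t y‖ ^ 2 / t ^ 2 else 0))
        ≤ ∫ y in Ioi (0:ℝ), (Ioo (x - t) (x + t)).indicator (fun _ => ct) y := by
      refine integral_mono_of_nonneg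
        (Filter.Eventually.of_forall fun y => h_nonneg t y) hIind ?_
      filter_upwards [ae_restrict_mem measurableSet_Ioi] with y hy
      by_cases hxy : |x - y| < t
      · rw [if_pos hxy]
        have hmem : y ∈ Ioo (x - t) (x + t) := by
          have := abs_lt.1 hxy
          constructor <;> linarith [this.1, this.2]
        rw [indicator_of_mem hmem]
        have hab : ‖G t y‖ ≤ K5 * t ^ β * Q := hG t y ht hy hxy
        have : ‖G t y‖ ^ 2 ≤ (K5 * t ^ β * Q)^2 :=
          pow_le_pow_left₀ (norm_nonneg _) hab 2
        rw [hctdef]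
        exact (div_le_div_iff_of_pos_right (by positivity)).2 this
      · rw [if_neg hxy]
        exact indicator_nonneg (fun _ _ => hct0) y
    have step2 : (∫ y in Ioi (0:ℝ), (Ioo (x - t) (x + t)).indicator (fun _ => ct) y)
        ≤ 2 * t * ct := by
      rw [MeasureTheory.integral_indicator measurableSet_Ioo,
        Measure.restrict_restrict measurableSet_Ioo, setIntegral_const]
      have hvol : (volume (Ioo (x - t) (x + t) ∩ Ioi 0)).toReal ≤ 2 * t := by
        have h1 : volume (Ioo (x - t) (x + t) ∩ Ioi 0) ≤ volume (Ioo (x - t) (x + t)) :=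
          measure_mono inter_subset_left
        have h2 : (volume (Ioo (x - t) (x + t))).toReal = 2 * t := by
          rw [Real.volume_Ioo, ENNReal.toReal_ofReal (by linarith)]
          ring
        calc (volume (Ioo (x - t) (x + t) ∩ Ioi 0)).toReal
            ≤ (volume (Ioo (x - t) (x + t))).toReal := by
              refine ENNReal.toReal_mono ?_ h1
              rw [Real.volume_Ioo]
              exact ENNReal.ofReal_ne_top
          _ = 2 * t := h2
      rw [smul_eq_mul]
      exact mul_le_mul_of_nonneg_right hvol hct0
    have step3 : 2 * t * ct ≤ K6 * (t ^ (2*β - 1) * min (Rx ^ δ2) (t ^ δ2)) := by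
      have e1 : (t ^ β)^2 = t ^ (2*β) := by
        rw [sq, ← Real.rpow_add ht]; congr 1; ring
      have e2 : Q^2 = 2^(2*β+2) * (t + Rx) ^ δ2 := by
        rw [hQdef, sq, ← Real.rpow_add htRx]
        rw [show (-β - 1) + (-β - 1) = δ2 by simp only [hδ2def]; ring]
        rw [Real.div_rpow (by linarith) (by norm_num : (0:ℝ) ≤ 2)]
        rw [div_eq_mul_inv, ← Real.rpow_neg (by norm_num : (0:ℝ) ≤ 2)]
        rw [show -δ2 = 2*β+2 by simp only [hδ2def]; ring]
        ring
      have e3 : 2 * t * ct = K5^2 * 2^(2*β+2) * (t ^ (2*β) * t * (t^2)⁻¹ * 2) * (t + Rx) ^ δ2 := by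
        rw [hctdef, mul_pow, mul_pow, e1, e2]
        field_simp
      have e4 : t ^ (2*β) * t * (t^2)⁻¹ * 2 = 2 * t ^ (2*β - 1) := by
        rw [show t ^ (2*β) * t = t ^ (2*β) * t ^ (1:ℝ) by rw [Real.rpow_one],
          ← Real.rpow_add ht]
        rw [show (t:ℝ)^2 = t ^ ((2:ℕ):ℝ) by rw [Real.rpow_natCast]]
        rw [← Real.rpow_neg ht.le, ← Real.rpow_add ht]
        rw [show 2*β + 1 + -((2:ℕ):ℝ) = 2*β - 1 by push_cast; ring]
        ring
      have e5 : (t + Rx) ^ δ2 ≤ min (Rx ^ δ2) (t ^ δ2) := by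
        refine le_min ?_ ?_
        · exact Real.rpow_le_rpow_of_nonpos hRx (by linarith) hδ2.le
        · exact Real.rpow_le_rpow_of_nonpos ht (by linarith) hδ2.le
      rw [e3, e4]
      calc K5^2 * 2^(2*β+2) * (2 * t ^ (2*β - 1)) * (t + Rx) ^ δ2
          ≤ K5^2 * 2^(2*β+2) * (2 * t ^ (2*β - 1)) * min (Rx ^ δ2) (t ^ δ2) := by
            refine mul_le_mul_of_nonneg_left e5 ?_
            have : (0:ℝ) ≤ t ^ (2*β - 1) := Real.rpow_nonneg ht.le _
            positivity
        _ = K6 * (t ^ (2*β - 1) * min (Rx ^ δ2) (t ^ δ2)) := by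
            rw [hK6def]; ring
    exact (step1.trans step2).trans step3
  -- outer integral
  have houter : ∫ t in Ioi (0:ℝ), ∫ y in Ioi (0:ℝ),
        (if |x - y| < t then ‖G t y‖ ^ 2 / t ^ 2 else 0)
      ≤ ∫ t in Ioi (0:ℝ), K6 * (t ^ (2*β - 1) * min (Rx ^ δ2) (t ^ δ2)) := by
    refine integral_mono_of_nonneg
      (Filter.Eventually.of_forall fun t => integral_nonneg fun y => h_nonneg t y)
      (core2.1.const_mul K6) ?_
    filter_upwards [ae_restrict_mem measurableSet_Ioi] with t ht
    exact hinner t ht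
  refine houter.trans ?_
  rw [MeasureTheory.integral_const_mul]
  have := mul_le_mul_of_nonneg_left core2.2 hK6
  refine this.trans (le_of_eq ?_)
  rw [show (2*β - 1) + δ2 + 1 = (-2:ℝ) by simp only [hδ2def]; ring]
  have e7 : (1:ℝ)/(2*β - 1 + 1) + 1 / -(-2:ℝ) = 1/(2*β) + 1/2 := by
    norm_num
  rw [e7, hK6def]
  ring

end S15

open S15 in
set_option maxHeartbeats 2000000 in
/-- cone-square estimates for the pieces of the Bessel Poisson kernel:
`‖t^β ∂_t^β P_t^{𝔅_λ,1}(y,z)‖_{L²(Γ₊(x), dy dt/t²)} ≤ C/|x−z|` and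
`‖t^β ∂_t^β P_t^{𝔅_λ,2}(y,z)‖_{L²(Γ₊(x), dy dt/t²)} ≤ C/(x+z)`. -/
theorem statement15 (β lam : ℝ) (hβ : 0 < β) (hlam : 0 < lam) :
    ∃ C > (0 : ℝ),
      (∀ x z : ℝ, 0 < x → 0 < z → x ≠ z →
        Real.sqrt (∫ t in Set.Ioi (0 : ℝ), ∫ y in Set.Ioi (0 : ℝ),
            (if |x - y| < t then
                ‖((t ^ β : ℝ) : ℂ) *
                    fracDeriv β (fun τ => (besselPoisson1 lam τ y z : ℂ)) t‖ ^ 2 / t ^ 2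
              else 0))
          ≤ C / |x - z|) ∧
      (∀ x z : ℝ, 0 < x → 0 < z →
        Real.sqrt (∫ t in Set.Ioi (0 : ℝ), ∫ y in Set.Ioi (0 : ℝ),
            (if |x - y| < t then
                ‖((t ^ β : ℝ) : ℂ) *
                    fracDeriv β (fun τ => (besselPoisson2 lam τ y z : ℂ)) t‖ ^ 2 / t ^ 2
              else 0))
          ≤ C / (x + z)) := by
  obtain ⟨K1, hK1, hker1⟩ := kernel_bound1 hlam (fracOrder β)
  obtain ⟨K2, hK2, hker2⟩ := kernel_bound2 hlam (fracOrder β)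
  have hσ0 : 0 < (fracOrder β : ℝ) - β := by linarith [fracOrder_lt hβ]
  have hΓ : 0 < Real.Gamma ((fracOrder β : ℝ) - β) := Real.Gamma_pos_of_pos hσ0
  set Cc : ℝ := 1/((fracOrder β : ℝ) - β) + 1/(β+1) with hCc
  have hCc0 : 0 < Cc := by positivity
  set K51 : ℝ := 1/Real.Gamma ((fracOrder β : ℝ) - β) * K1 * Cc with hK51
  set K52 : ℝ := 1/Real.Gamma ((fracOrder β : ℝ) - β) * K2 * Cc with hK52
  have hK510 : 0 ≤ K51 := by positivity
  have hK520 : 0 ≤ K52 := by positivity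
  set C71 : ℝ := K51^2 * 2^(2*β+2) * 2 * (1/(2*β) + 1/2) with hC71
  set C72 : ℝ := K52^2 * 2^(2*β+2) * 2 * (1/(2*β) + 1/2) with hC72
  have hC710 : 0 ≤ C71 := by positivity
  have hC720 : 0 ≤ C72 := by positivity
  set C : ℝ := max (Real.sqrt C71) (Real.sqrt C72) + 1 with hC
  have hC0 : 0 < C := by positivity
  -- fractional derivative bounds
  have hfrac1 : ∀ y z t : ℝ, 0 < y → 0 < z → 0 < t →
      ‖fracDeriv β (fun τ => ((besselPoisson1 lam τ y z : ℝ) : ℂ)) t‖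
        ≤ K51 * (t + |y - z|) ^ (-β - 1) := by
    intro y z t hy hz ht
    have h := fracDeriv_abs_le hβ hK1.le (abs_nonneg (y - z))
      (fun τ hτ => hker1 y z τ hy hz hτ) ht
    calc ‖fracDeriv β (fun τ => ((besselPoisson1 lam τ y z : ℝ) : ℂ)) t‖
        ≤ 1/Real.Gamma ((fracOrder β : ℝ) - β)
            * (K1 * (Cc * (t + |y - z|) ^ (-β - 1))) := h
      _ = K51 * (t + |y - z|) ^ (-β - 1) := by rw [hK51]; ring
  have hfrac2 : ∀ y z t : ℝ, 0 < y → 0 < z → 0 < t →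
      ‖fracDeriv β (fun τ => ((besselPoisson2 lam τ y z : ℝ) : ℂ)) t‖
        ≤ K52 * (t + (y + z)) ^ (-β - 1) := by
    intro y z t hy hz ht
    have hyz : (0:ℝ) ≤ y + z := by linarith
    have h := fracDeriv_abs_le hβ hK2.le hyz
      (fun τ hτ => hker2 y z τ hy hz hτ) ht
    calc ‖fracDeriv β (fun τ => ((besselPoisson2 lam τ y z : ℝ) : ℂ)) t‖
        ≤ 1/Real.Gamma ((fracOrder β : ℝ) - β)
            * (K2 * (Cc * (t + (y + z)) ^ (-β - 1))) := h
      _ = K52 * (t + (y + z)) ^ (-β - 1) := by rw [hK52]; ring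
  refine ⟨C, hC0, ?_, ?_⟩
  · -- part 1
    intro x z hx hz hxz
    set Rx : ℝ := |x - z| with hRx
    have hRx0 : 0 < Rx := abs_pos.2 (sub_ne_zero.2 hxz)
    have hG : ∀ t y : ℝ, 0 < t → 0 < y → |x - y| < t →
        ‖((t ^ β : ℝ) : ℂ)
            * fracDeriv β (fun τ => ((besselPoisson1 lam τ y z : ℝ) : ℂ)) t‖
          ≤ K51 * t ^ β * ((t + Rx)/2) ^ (-β - 1) := by
      intro t y ht hy hxy
      have htβ : (0:ℝ) ≤ t ^ β := Real.rpow_nonneg ht.le β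
      have hcone : (t + Rx)/2 ≤ t + |y - z| := by
        have h1 : |x - z| ≤ |x - y| + |y - z| := abs_sub_le x y z
        have h2 : |y - z| ≥ 0 := abs_nonneg _
        simp only [hRx]
        linarith
      have hQle : (t + |y - z|) ^ (-β - 1) ≤ ((t + Rx)/2) ^ (-β - 1) :=
        Real.rpow_le_rpow_of_nonpos (by linarith) hcone (by linarith)
      calc ‖((t ^ β : ℝ) : ℂ)
              * fracDeriv β (fun τ => ((besselPoisson1 lam τ y z : ℝ) : ℂ)) t‖
          = t ^ β * ‖fracDeriv β
              (fun τ => ((besselPoisson1 lam τ y z : ℝ) : ℂ)) t‖ := by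
            rw [norm_mul, Complex.norm_real, Real.norm_eq_abs, abs_of_nonneg htβ]
        _ ≤ t ^ β * (K51 * (t + |y - z|) ^ (-β - 1)) :=
            mul_le_mul_of_nonneg_left (hfrac1 y z t hy hz ht) htβ
        _ ≤ t ^ β * (K51 * ((t + Rx)/2) ^ (-β - 1)) := by
            refine mul_le_mul_of_nonneg_left ?_ htβ
            exact mul_le_mul_of_nonneg_left hQle hK510
        _ = K51 * t ^ β * ((t + Rx)/2) ^ (-β - 1) := by ring
    have hfb := final_bound hβ hRx0 hK510 hG
    have hsq := Real.sqrt_le_sqrt hfb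
    refine hsq.trans ?_
    have hinv : Rx ^ (-2:ℝ) = (1/Rx)^2 := by
      rw [Real.rpow_neg hRx0.le, show ((2:ℝ)) = ((2:ℕ):ℝ) by norm_num,
        Real.rpow_natCast]
      rw [one_div, inv_pow]
    rw [← hC71, hinv, Real.sqrt_mul hC710, Real.sqrt_sq (by positivity)]
    calc Real.sqrt C71 * (1/Rx) = Real.sqrt C71 / Rx := by ring
      _ ≤ C / Rx := by
          gcongr
          calc Real.sqrt C71 ≤ max (Real.sqrt C71) (Real.sqrt C72) := le_max_left _ _
            _ ≤ C := by rw [hC]; linarith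
  · -- part 2
    intro x z hx hz
    set Rx : ℝ := x + z with hRx
    have hRx0 : 0 < Rx := by simp only [hRx]; linarith
    have hG : ∀ t y : ℝ, 0 < t → 0 < y → |x - y| < t →
        ‖((t ^ β : ℝ) : ℂ)
            * fracDeriv β (fun τ => ((besselPoisson2 lam τ y z : ℝ) : ℂ)) t‖
          ≤ K52 * t ^ β * ((t + Rx)/2) ^ (-β - 1) := by
      intro t y ht hy hxy
      have htβ : (0:ℝ) ≤ t ^ β := Real.rpow_nonneg ht.le β
      have hcone : (t + Rx)/2 ≤ t + (y + z) := by
        have h1 : x - y < t := (abs_lt.1 hxy).2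
        simp only [hRx]
        linarith
      have hQle : (t + (y + z)) ^ (-β - 1) ≤ ((t + Rx)/2) ^ (-β - 1) :=
        Real.rpow_le_rpow_of_nonpos (by linarith) hcone (by linarith)
      calc ‖((t ^ β : ℝ) : ℂ)
              * fracDeriv β (fun τ => ((besselPoisson2 lam τ y z : ℝ) : ℂ)) t‖
          = t ^ β * ‖fracDeriv β
              (fun τ => ((besselPoisson2 lam τ y z : ℝ) : ℂ)) t‖ := by
            rw [norm_mul, Complex.norm_real, Real.norm_eq_abs, abs_of_nonneg htβ]
        _ ≤ t ^ β * (K52 * (t + (y + z)) ^ (-β - 1)) :=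
            mul_le_mul_of_nonneg_left (hfrac2 y z t hy hz ht) htβ
        _ ≤ t ^ β * (K52 * ((t + Rx)/2) ^ (-β - 1)) := by
            refine mul_le_mul_of_nonneg_left ?_ htβ
            exact mul_le_mul_of_nonneg_left hQle hK520
        _ = K52 * t ^ β * ((t + Rx)/2) ^ (-β - 1) := by ring
    have hfb := final_bound hβ hRx0 hK520 hG
    have hsq := Real.sqrt_le_sqrt hfb
    refine hsq.trans ?_
    have hinv : Rx ^ (-2:ℝ) = (1/Rx)^2 := by
      rw [Real.rpow_neg hRx0.le, show ((2:ℝ)) = ((2:ℕ):ℝ) by norm_num,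
        Real.rpow_natCast]
      rw [one_div, inv_pow]
    rw [← hC72, hinv, Real.sqrt_mul hC720, Real.sqrt_sq (by positivity)]
    calc Real.sqrt C72 * (1/Rx) = Real.sqrt C72 / Rx := by ring
      _ ≤ C / Rx := by
          gcongr
          calc Real.sqrt C72 ≤ max (Real.sqrt C71) (Real.sqrt C72) := le_max_right _ _
            _ ≤ C := by rw [hC]; linarith
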